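/- Let $n \geq 2$, $t > 0$, and $r_1 > n/2$. Then there is a constant $C'$ depending only on $n, r_1$ such that for all $x$ with $|x|^2 > 1+t$: $\int_{\{y : |y| \geq |x|/2\}} |y|^{-n} (1 + |x-y|^2/(1+t))^{-r_1}\,dy \leq C' (1 + |x|^2/(1+t))^{-n/2}$. -/
import Mathlib


open MeasureTheory Real Filter

set_option maxHeartbeats 1000000 in
theorem stmt_1 (n : ℕ) (hn : 2 ≤ n) (r₁ : ℝ) (hr₁ : r₁ > (n : ℝ) / 2) :
    ∃ C' > 0, ∀ (t : ℝ), 0 < t → ∀ x : EuclideanSpace ℝ (Fin n),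
      ‖x‖ ^ 2 > 1 + t →
      (∫ y in {y : EuclideanSpace ℝ (Fin n) | ‖x‖ / 2 ≤ ‖y‖},
          ‖y‖ ^ (-(n : ℝ)) * (1 + ‖x - y‖ ^ 2 / (1 + t)) ^ (-r₁))
        ≤ C' * (1 + ‖x‖ ^ 2 / (1 + t)) ^ (-(n : ℝ) / 2) := by
  have hfr : Module.finrank ℝ (EuclideanSpace ℝ (Fin n)) = n := finrank_euclideanSpace_fin
  have hnn : (0 : ℝ) ≤ (n : ℝ) := Nat.cast_nonneg n
  have hexp1 : -(n : ℝ) ≤ 0 := by linarith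
  have hexp2 : -(n : ℝ) / 2 ≤ 0 := by linarith
  -- integrability of the model profile
  have hg : Integrable (fun z : EuclideanSpace ℝ (Fin n) => (1 + ‖z‖ ^ 2) ^ (-r₁)) := by
    have h := integrable_rpow_neg_one_add_norm_sq (E := EuclideanSpace ℝ (Fin n))
      (μ := volume) (r := 2 * r₁) (by rw [finrank_euclideanSpace_fin]; linarith)
    convert h using 2 with z
    ring_nf
  set I := ∫ z : EuclideanSpace ℝ (Fin n), (1 + ‖z‖ ^ 2) ^ (-r₁) with hIdef
  have hI0 : 0 ≤ I := integral_nonneg fun z => Real.rpow_nonneg (by positivity) _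
  clear_value I
  refine ⟨(2 : ℝ) ^ n * 2 ^ ((n : ℝ) / 2) * (I + 1), by positivity, ?_⟩
  intro t ht x hx
  set s := 1 + t with hs
  have hs0 : 0 < s := by linarith
  have hx1 : 1 < ‖x‖ := by nlinarith [norm_nonneg x]
  have hx0 : 0 < ‖x‖ := by linarith
  set R := Real.sqrt s with hRdef
  have hR0 : 0 < R := Real.sqrt_pos.2 hs0
  have hFy : ∀ y : EuclideanSpace ℝ (Fin n),
      (1 + ‖x - y‖ ^ 2 / s) ^ (-r₁) = (1 + ‖R⁻¹ • (x - y)‖ ^ 2) ^ (-r₁) := by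
    intro y
    have hnrm : ‖R⁻¹ • (x - y)‖ ^ 2 = ‖x - y‖ ^ 2 / s := by
      rw [norm_smul, norm_inv, Real.norm_eq_abs, abs_of_pos hR0, mul_pow, inv_pow, hRdef,
        Real.sq_sqrt hs0.le]
      ring
    rw [hnrm]
  -- integrability of F
  have hGint : Integrable (fun y : EuclideanSpace ℝ (Fin n) => (1 + ‖R⁻¹ • y‖ ^ 2) ^ (-r₁)) :=
    (integrable_comp_smul_iff volume
      (fun z : EuclideanSpace ℝ (Fin n) => (1 + ‖z‖ ^ 2) ^ (-r₁)) (inv_ne_zero hR0.ne')).2 hg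
  have hFint : Integrable (fun y : EuclideanSpace ℝ (Fin n) => (1 + ‖x - y‖ ^ 2 / s) ^ (-r₁)) := by
    have h := (integrable_comp_sub_left
      (fun y : EuclideanSpace ℝ (Fin n) => (1 + ‖R⁻¹ • y‖ ^ 2) ^ (-r₁)) x).2 hGint
    refine h.congr (Eventually.of_forall fun y => ?_)
    exact (hFy y).symm
  have hFpos : ∀ y : EuclideanSpace ℝ (Fin n), 0 < (1 + ‖x - y‖ ^ 2 / s) ^ (-r₁) := fun y => by
    positivity
  -- measurable set
  have hS : MeasurableSet {y : EuclideanSpace ℝ (Fin n) | ‖x‖ / 2 ≤ ‖y‖} :=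
    measurableSet_le measurable_const measurable_norm
  -- pointwise bound constant
  have h2n : (‖x‖ / 2) ^ (-(n : ℝ)) = (2 : ℝ) ^ n * ‖x‖ ^ (-(n : ℝ)) := by
    rw [div_eq_mul_inv, Real.mul_rpow (norm_nonneg x) (by norm_num),
      Real.inv_rpow (by norm_num), Real.rpow_neg (by norm_num : (0 : ℝ) ≤ 2), inv_inv,
      Real.rpow_natCast]
    ring
  have hbound : ∀ y ∈ {y : EuclideanSpace ℝ (Fin n) | ‖x‖ / 2 ≤ ‖y‖},
      ‖y‖ ^ (-(n : ℝ)) * (1 + ‖x - y‖ ^ 2 / s) ^ (-r₁)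
        ≤ ((2 : ℝ) ^ n * ‖x‖ ^ (-(n : ℝ))) * (1 + ‖x - y‖ ^ 2 / s) ^ (-r₁) := by
    intro y hy
    have hy' : ‖x‖ / 2 ≤ ‖y‖ := hy
    have h1 : ‖y‖ ^ (-(n : ℝ)) ≤ (‖x‖ / 2) ^ (-(n : ℝ)) :=
      Real.rpow_le_rpow_of_nonpos (by positivity) hy' hexp1
    rw [← h2n]
    exact mul_le_mul_of_nonneg_right h1 (hFpos y).le
  -- integrability of the integrand on the set
  have hmeas : AEStronglyMeasurable (fun y : EuclideanSpace ℝ (Fin n) =>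
      ‖y‖ ^ (-(n : ℝ)) * (1 + ‖x - y‖ ^ 2 / s) ^ (-r₁))
      (volume.restrict {y | ‖x‖ / 2 ≤ ‖y‖}) := by
    have hm : Measurable (fun y : EuclideanSpace ℝ (Fin n) => ‖y‖ ^ (-(n : ℝ))) := by fun_prop
    exact (hm.aestronglyMeasurable.mul hFint.aestronglyMeasurable).restrict
  have hint2 : IntegrableOn (fun y : EuclideanSpace ℝ (Fin n) =>
      ((2 : ℝ) ^ n * ‖x‖ ^ (-(n : ℝ))) * (1 + ‖x - y‖ ^ 2 / s) ^ (-r₁))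
      {y | ‖x‖ / 2 ≤ ‖y‖} :=
    (hFint.const_mul _).integrableOn
  have hint1 : IntegrableOn (fun y : EuclideanSpace ℝ (Fin n) =>
      ‖y‖ ^ (-(n : ℝ)) * (1 + ‖x - y‖ ^ 2 / s) ^ (-r₁)) {y | ‖x‖ / 2 ≤ ‖y‖} := by
    refine hint2.mono' hmeas ?_
    rw [ae_restrict_iff' hS]
    refine Eventually.of_forall fun y hy => ?_
    have h0 : 0 ≤ ‖y‖ ^ (-(n : ℝ)) * (1 + ‖x - y‖ ^ 2 / s) ^ (-r₁) := by positivity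
    rw [Real.norm_eq_abs, abs_of_nonneg h0]
    exact hbound y hy
  -- chain of inequalities
  have step1 : (∫ y in {y : EuclideanSpace ℝ (Fin n) | ‖x‖ / 2 ≤ ‖y‖},
      ‖y‖ ^ (-(n : ℝ)) * (1 + ‖x - y‖ ^ 2 / s) ^ (-r₁)) ≤
      ∫ y in {y : EuclideanSpace ℝ (Fin n) | ‖x‖ / 2 ≤ ‖y‖},
        ((2 : ℝ) ^ n * ‖x‖ ^ (-(n : ℝ))) * (1 + ‖x - y‖ ^ 2 / s) ^ (-r₁) :=
    setIntegral_mono_on hint1 hint2 hS hbound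
  have step2 : (∫ y in {y : EuclideanSpace ℝ (Fin n) | ‖x‖ / 2 ≤ ‖y‖},
      ((2 : ℝ) ^ n * ‖x‖ ^ (-(n : ℝ))) * (1 + ‖x - y‖ ^ 2 / s) ^ (-r₁)) ≤
      ∫ y : EuclideanSpace ℝ (Fin n),
        ((2 : ℝ) ^ n * ‖x‖ ^ (-(n : ℝ))) * (1 + ‖x - y‖ ^ 2 / s) ^ (-r₁) := by
    refine setIntegral_le_integral (hFint.const_mul _) ?_
    refine Eventually.of_forall fun y => ?_
    have := hFpos y
    positivity
  have hRn : R ^ n = s ^ ((n : ℝ) / 2) := by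
    rw [← Real.rpow_natCast R n, hRdef, Real.sqrt_eq_rpow, ← Real.rpow_mul hs0.le]
    congr 1
    ring
  have hFval : (∫ y : EuclideanSpace ℝ (Fin n), (1 + ‖x - y‖ ^ 2 / s) ^ (-r₁)) = R ^ n * I := by
    calc (∫ y : EuclideanSpace ℝ (Fin n), (1 + ‖x - y‖ ^ 2 / s) ^ (-r₁))
        = ∫ y : EuclideanSpace ℝ (Fin n), (1 + ‖R⁻¹ • (x - y)‖ ^ 2) ^ (-r₁) :=
          integral_congr_ae (Eventually.of_forall fun y => hFy y)
      _ = ∫ y : EuclideanSpace ℝ (Fin n), (1 + ‖R⁻¹ • y‖ ^ 2) ^ (-r₁) :=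
          integral_sub_left_eq_self
            (fun y : EuclideanSpace ℝ (Fin n) => (1 + ‖R⁻¹ • y‖ ^ 2) ^ (-r₁)) volume x
      _ = R ^ n * I := by
          rw [Measure.integral_comp_inv_smul volume
            (fun z : EuclideanSpace ℝ (Fin n) => (1 + ‖z‖ ^ 2) ^ (-r₁)) R, hfr,
            abs_of_nonneg (pow_nonneg hR0.le n), smul_eq_mul, hIdef]
  -- key comparison
  have hP0 : (0 : ℝ) < (1 + ‖x‖ ^ 2 / s) ^ (-(n : ℝ) / 2) := by positivity
  have h1 : 1 + ‖x‖ ^ 2 / s ≤ 2 * ‖x‖ ^ 2 / s := by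
    have : 1 < ‖x‖ ^ 2 / s := by
      rw [lt_div_iff₀ hs0]; linarith
    rw [mul_div_assoc]; linarith
  have h2 : (2 * ‖x‖ ^ 2 / s) ^ (-(n : ℝ) / 2) ≤ (1 + ‖x‖ ^ 2 / s) ^ (-(n : ℝ) / 2) :=
    Real.rpow_le_rpow_of_nonpos (by positivity) h1 hexp2
  have h3 : (2 * ‖x‖ ^ 2 / s) ^ (-(n : ℝ) / 2)
      = 2 ^ (-(n : ℝ) / 2) * (‖x‖ ^ (-(n : ℝ)) * s ^ ((n : ℝ) / 2)) := by
    rw [div_eq_mul_inv, mul_assoc,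
      Real.mul_rpow (by norm_num) (by positivity),
      Real.mul_rpow (by positivity) (by positivity),
      Real.inv_rpow hs0.le,
      ← Real.rpow_natCast ‖x‖ 2, ← Real.rpow_mul (norm_nonneg x),
      show ((2 : ℕ) : ℝ) * (-(n : ℝ) / 2) = -(n : ℝ) by push_cast; ring,
      show (-(n : ℝ) / 2) = -((n : ℝ) / 2) by ring,
      Real.rpow_neg hs0.le, inv_inv]
  have hpow2 : (2 : ℝ) ^ ((n : ℝ) / 2) * (2 : ℝ) ^ (-(n : ℝ) / 2) = 1 := by
    rw [← Real.rpow_add (by norm_num : (0 : ℝ) < 2),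
      show (n : ℝ) / 2 + -(n : ℝ) / 2 = 0 by ring, Real.rpow_zero]
  have hkey : ‖x‖ ^ (-(n : ℝ)) * R ^ n
      ≤ 2 ^ ((n : ℝ) / 2) * (1 + ‖x‖ ^ 2 / s) ^ (-(n : ℝ) / 2) := by
    calc ‖x‖ ^ (-(n : ℝ)) * R ^ n
        = 2 ^ ((n : ℝ) / 2) * (2 * ‖x‖ ^ 2 / s) ^ (-(n : ℝ) / 2) := by
          rw [hRn, h3, show (2 : ℝ) ^ ((n : ℝ) / 2) * (2 ^ (-(n : ℝ) / 2) *
            (‖x‖ ^ (-(n : ℝ)) * s ^ ((n : ℝ) / 2))) = ((2 : ℝ) ^ ((n : ℝ) / 2) *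
            2 ^ (-(n : ℝ) / 2)) * (‖x‖ ^ (-(n : ℝ)) * s ^ ((n : ℝ) / 2)) from by ring,
            hpow2, one_mul]
      _ ≤ 2 ^ ((n : ℝ) / 2) * (1 + ‖x‖ ^ 2 / s) ^ (-(n : ℝ) / 2) :=
          mul_le_mul_of_nonneg_left h2 (by positivity)
  calc (∫ y in {y : EuclideanSpace ℝ (Fin n) | ‖x‖ / 2 ≤ ‖y‖},
        ‖y‖ ^ (-(n : ℝ)) * (1 + ‖x - y‖ ^ 2 / s) ^ (-r₁))
      ≤ ∫ y : EuclideanSpace ℝ (Fin n),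
          ((2 : ℝ) ^ n * ‖x‖ ^ (-(n : ℝ))) * (1 + ‖x - y‖ ^ 2 / s) ^ (-r₁) :=
        le_trans step1 step2
    _ = (2 : ℝ) ^ n * ‖x‖ ^ (-(n : ℝ)) * (R ^ n * I) := by
        rw [integral_const_mul, hFval]
    _ ≤ (2 : ℝ) ^ n * 2 ^ ((n : ℝ) / 2) * (I + 1) * (1 + ‖x‖ ^ 2 / s) ^ (-(n : ℝ) / 2) := by
        have hc : (0 : ℝ) ≤ (2 : ℝ) ^ n * I :=
          mul_nonneg (pow_nonneg (by norm_num) n) hI0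
        have hmul := mul_le_mul_of_nonneg_left hkey hc
        nlinarith [hmul, mul_pos (mul_pos (pow_pos (show (0:ℝ) < 2 by norm_num) n)
          (Real.rpow_pos_of_pos (show (0:ℝ) < 2 by norm_num) ((n : ℝ) / 2))) hP0]
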